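/- Let (X,d,μ) be a metric measure space and suppose there exists C ≥ 1 such that for every Lipschitz f : X → ℝ and every *-upper gradient ρ of f, one has Lip(f,x) ≤ C·ρ(x) for μ-almost every x ∈ X. Then for every n ∈ ℕ, every Lipschitz φ : X → ℝⁿ and every S ∈ 𝒮(φ), one has μ(S ∩ ind φ) = 0. -/

import Mathlib

open MeasureTheory Metric Set Filter Topology ENNReal NNReal
open scoped RealInnerProductSpace

noncomputable section

namespace BKO

/-- `ℝⁿ` with the Euclidean metric. -/
abbrev E (n : ℕ) : Type := EuclideanSpace ℝ (Fin n)

variable {X : Type*} [MetricSpace X]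

/-- A set `G ⊆ ℝ × X` is the graph of a curve fragment if all first coordinates lie
in `[0,1]` and it is the graph of a `2`-biLipschitz function defined on a subset of `[0,1]`. -/
def IsFragmentGraph (X : Type*) [MetricSpace X] (G : Set (ℝ × X)) : Prop :=
  (∀ p ∈ G, p.1 ∈ Set.Icc (0:ℝ) 1) ∧
  ∀ p ∈ G, ∀ q ∈ G, |p.1 - q.1| ≤ 2 * dist p.2 q.2 ∧ dist p.2 q.2 ≤ 2 * |p.1 - q.1|

/-- The space `Γ(X)` of curve fragments, identified with their graphs (nonempty compact
subsets of `[0,1] × X`), with the Hausdorff metric `d_Γ(γ₁,γ₂) = d_H(gr γ₁, gr γ₂)`. -/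
def Fragment (X : Type*) [MetricSpace X] : Type _ :=
  {G : TopologicalSpace.NonemptyCompacts (ℝ × X) // IsFragmentGraph X (G : Set (ℝ × X))}

instance : MetricSpace (Fragment X) :=
  inferInstanceAs (MetricSpace {G : TopologicalSpace.NonemptyCompacts (ℝ × X) // _})

instance : MeasurableSpace (Fragment X) := borel _
instance : BorelSpace (Fragment X) := ⟨rfl⟩

namespace Fragment

/-- The graph of a curve fragment. -/
def graph (γ : Fragment X) : Set (ℝ × X) := (γ.1 : Set (ℝ × X))

/-- The (compact) domain of a curve fragment. -/
def dom (γ : Fragment X) : Set ℝ := Prod.fst '' γ.graph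

/-- The image of a curve fragment. -/
def im (γ : Fragment X) : Set X := Prod.snd '' γ.graph

/-- The function `dom γ → X` determined by the graph (junk value off the domain). -/
def fn (γ : Fragment X) (t : ℝ) : X :=
  @dite X (∃ x, (t, x) ∈ γ.graph) (Classical.dec _)
    (fun h => h.choose) (fun _ => γ.1.nonempty.choose.2)

/-- `γ_* 𝓛¹`: the pushforward under `γ` of Lebesgue measure restricted to `dom γ`. -/
def measure [MeasurableSpace X] (γ : Fragment X) : Measure X :=
  (volume.restrict γ.dom).map γ.fn

end Fragment

/-- The measure `ν(ℙ)`, `ν(ℙ)(B) = ∫ γ_*𝓛¹(B) dℙ(γ)`. -/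
def nu [MeasurableSpace X] (ℙ : Measure (Fragment X)) : Measure X :=
  ℙ.bind Fragment.measure

/-- The cone `C(w,θ) = {v : |⟨v,w⟩| ≥ θ‖v‖}`. -/
def cone {n : ℕ} (w : E n) (θ : ℝ) : Set (E n) := {v | θ * ‖v‖ ≤ |⟪v, w⟫|}

/-- A cone in `ℝⁿ` is a set of the form `C(w,θ)` with `w ∈ Sⁿ⁻¹`, `θ ∈ (0,1)`. -/
def IsCone {n : ℕ} (C : Set (E n)) : Prop :=
  ∃ (w : E n) (θ : ℝ), ‖w‖ = 1 ∧ θ ∈ Set.Ioo (0:ℝ) 1 ∧ C = cone w θ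

/-- `γ` is a `C`-curve with respect to `φ`. -/
def IsConeCurve {n : ℕ} (φ : X → E n) (C : Set (E n)) (γ : Fragment X) : Prop :=
  ∃ δ > (0:ℝ), ∀ p ∈ γ.graph, ∀ q ∈ γ.graph,
    φ p.2 - φ q.2 ∈ C \ Metric.ball 0 (δ * |p.1 - q.1|)

/-- `ℙ` is a `C`-Alberti representation of `μ` with respect to `φ`. -/
def IsConeAlbertiRep [MeasurableSpace X] {n : ℕ} (μ : Measure X) (φ : X → E n)
    (C : Set (E n)) (ℙ : Measure (Fragment X)) : Prop :=
  IsProbabilityMeasure ℙ ∧ μ ≪ nu ℙ ∧ ∀ᵐ γ ∂ℙ, IsConeCurve φ C γ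

/-- `S` is `C`-null with respect to `φ`: every `C`-curve meets `S` in `𝓗¹`-measure zero. -/
def ConeNull [MeasurableSpace X] [BorelSpace X] {n : ℕ} (φ : X → E n) (C : Set (E n))
    (S : Set X) : Prop :=
  ∀ γ : Fragment X, IsConeCurve φ C γ → μH[1] (γ.im ∩ S) = 0

/-- Cones `C₁,…,C_m` are independent. -/
def IndepCones {n m : ℕ} (C : Fin m → Set (E n)) : Prop :=
  ∀ v : Fin m → E n, (∀ i, v i ∈ C i ∧ v i ≠ 0) → LinearIndependent ℝ v

/-- `μ` has `n` independent Alberti representations. -/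
def HasIndepAlberti [MeasurableSpace X] (μ : Measure X) (n : ℕ) : Prop :=
  ∃ φ : X → E n, (∃ K, LipschitzWith K φ) ∧ ∃ C : Fin n → Set (E n),
    (∀ i, IsCone (C i)) ∧ IndepCones C ∧ ∀ i, ∃ ℙ, IsConeAlbertiRep μ φ (C i) ℙ

/-- The collection `𝒮(φ)` of singular sets. -/
def MemScal [MeasurableSpace X] [BorelSpace X] {n : ℕ} (φ : X → E n) (S : Set X) : Prop :=
  MeasurableSet S ∧ ∀ θ ∈ Set.Ioo (0:ℝ) 1, ∃ (m : ℕ) (S' : Fin m → Set X) (w : Fin m → E n),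
    S = (⋃ i, S' i) ∧ ∀ i, MeasurableSet (S' i) ∧ ‖w i‖ = 1 ∧ ConeNull φ (cone (w i) θ) (S' i)

/-- `Lip(f,x) = limsup_{r→0⁺} sup_{d(x,y)≤r} |f(y)-f(x)|/r`. -/
def lipAt (f : X → ℝ) (x : X) : ℝ :=
  Filter.limsup (fun r : ℝ => sSup ((fun y => |f y - f x| / r) '' Metric.closedBall x r))
    (𝓝[>] (0:ℝ))

/-- `ind φ = {x : Lip(D⬝φ, x) > 0 for all D ∈ Sⁿ⁻¹}`. -/
def indSet {n : ℕ} (φ : X → E n) : Set X :=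
  {x | ∀ D : E n, ‖D‖ = 1 → 0 < lipAt (fun y => ⟪φ y, D⟫) x}

/-- `f` is differentiable with respect to `φ` at `x₀`, with a unique derivative. -/
def DiffWrtAt {n : ℕ} (φ : X → E n) (f : X → ℝ) (x₀ : X) : Prop :=
  ∃! L : E n →ₗ[ℝ] ℝ,
    Filter.Tendsto (fun x => |f x - f x₀ - L (φ x - φ x₀)| / dist x x₀) (𝓝[≠] x₀) (𝓝 0)

/-- `(X,d,μ)` is a Lipschitz differentiability space, with all chart dimensions
satisfying the predicate `P`. -/
def IsLipDiffSpaceWith [MeasurableSpace X] (μ : Measure X) (P : ℕ → Prop) : Prop :=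
  ∃ (N : ℕ → ℕ) (U : ℕ → Set X) (φ : (i : ℕ) → X → E (N i)),
    (∀ i, P (N i)) ∧ (∀ i, MeasurableSet (U i)) ∧ (⋃ i, U i) = Set.univ ∧
    (∀ i, ∃ K, LipschitzWith K (φ i)) ∧
    ∀ f : X → ℝ, (∃ K, LipschitzWith K f) →
      ∀ i, ∀ᵐ x ∂μ, x ∈ U i → DiffWrtAt (φ i) f x

/-- `ρ` is an upper gradient of `f`. -/
def IsUpperGradient (f ρ : X → ℝ) : Prop :=
  ∀ γ : ℝ → X, LipschitzOnWith 1 γ (Set.Icc 0 1) →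
    |f (γ 1) - f (γ 0)| ≤ ∫ t in Set.Icc (0:ℝ) 1, ρ (γ t)

/-- `ρ` is a `*`-upper gradient of `f`. -/
def IsStarUpperGradient (f ρ : X → ℝ) : Prop :=
  ∀ γ : Fragment X, LipschitzOnWith 1 γ.fn γ.dom →
    ∀ᵐ t ∂(volume.restrict γ.dom),
      ∀ v : ℝ, HasDerivWithinAt (f ∘ γ.fn) v γ.dom t → |v| ≤ ρ (γ.fn t)

/-- The dyadic cube of side length `2^{-m}` in `[0,1)ⁿ` indexed by `k`. -/
def dyadicCube (n m : ℕ) (k : Fin n → Fin (2 ^ m)) : Set (E n) :=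
  {x | ∀ i, (k i : ℝ) / 2 ^ m ≤ x i ∧ x i < ((k i : ℝ) + 1) / 2 ^ m}

variable {X : Type*} [MetricSpace X] [CompleteSpace X] [TopologicalSpace.SeparableSpace X]
  [MeasurableSpace X] [BorelSpace X]

/-! ### Auxiliary lemmas -/

section Aux

variable {Y : Type*} [MetricSpace Y]

namespace Fragment

lemma isCompact_graph (γ : Fragment Y) : IsCompact γ.graph := γ.1.1.2

lemma graph_nonempty (γ : Fragment Y) : γ.graph.Nonempty := γ.1.2

lemma fn_mem_graph (γ : Fragment Y) {t : ℝ} (ht : t ∈ γ.dom) : (t, γ.fn t) ∈ γ.graph := by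
  obtain ⟨p, hp, rfl⟩ := ht
  have h : ∃ x, (p.1, x) ∈ γ.graph := ⟨p.2, hp⟩
  show (p.1, @dite Y _ (Classical.dec _) _ _) ∈ γ.graph
  rw [dif_pos h]
  exact h.choose_spec

lemma mem_dom_of_mem_graph (γ : Fragment Y) {p : ℝ × Y} (hp : p ∈ γ.graph) : p.1 ∈ γ.dom :=
  ⟨p, hp, rfl⟩

lemma isCompact_dom (γ : Fragment Y) : IsCompact γ.dom :=
  γ.isCompact_graph.image continuous_fst

lemma dom_subset (γ : Fragment Y) : γ.dom ⊆ Set.Icc (0:ℝ) 1 := by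
  rintro t ⟨p, hp, rfl⟩; exact γ.2.1 p hp

lemma abs_sub_le (γ : Fragment Y) {s t : ℝ} (hs : s ∈ γ.dom) (ht : t ∈ γ.dom) :
    |s - t| ≤ 2 * dist (γ.fn s) (γ.fn t) :=
  (γ.2.2 _ (γ.fn_mem_graph hs) _ (γ.fn_mem_graph ht)).1

lemma dist_fn_le (γ : Fragment Y) {s t : ℝ} (hs : s ∈ γ.dom) (ht : t ∈ γ.dom) :
    dist (γ.fn s) (γ.fn t) ≤ 2 * |s - t| :=
  (γ.2.2 _ (γ.fn_mem_graph hs) _ (γ.fn_mem_graph ht)).2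

lemma lipschitzOnWith_fn (γ : Fragment Y) : LipschitzOnWith 2 γ.fn γ.dom := by
  apply LipschitzOnWith.of_dist_le_mul
  intro s hs t ht
  simpa [Real.dist_eq] using γ.dist_fn_le hs ht

lemma continuousOn_fn (γ : Fragment Y) : ContinuousOn γ.fn γ.dom :=
  γ.lipschitzOnWith_fn.continuousOn

lemma measurableSet_dom (γ : Fragment Y) : MeasurableSet γ.dom :=
  γ.isCompact_dom.isClosed.measurableSet

lemma measurableSet_mem_dom_and [MeasurableSpace Y] [BorelSpace Y] (γ : Fragment Y)
    {S : Set Y} (hS : MeasurableSet S) : MeasurableSet {t | t ∈ γ.dom ∧ γ.fn t ∈ S} := by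
  have h1 : MeasurableSet ((γ.dom.restrict γ.fn) ⁻¹' S) :=
    (γ.continuousOn_fn.restrict.measurable) hS
  have h2 : {t | t ∈ γ.dom ∧ γ.fn t ∈ S} = Subtype.val '' ((γ.dom.restrict γ.fn) ⁻¹' S) := by
    ext t
    constructor
    · rintro ⟨ht, hft⟩; exact ⟨⟨t, ht⟩, hft, rfl⟩
    · rintro ⟨⟨u, hu⟩, hfu, rfl⟩; exact ⟨hu, hfu⟩
  rw [h2]
  exact (MeasurableSet.subtype_image γ.measurableSet_dom h1)

end Fragment

/-- The set of isolated points of a subset of `ℝ` is countable. -/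
lemma countable_isolated (s : Set ℝ) : {t | t ∈ s ∧ 𝓝[s \ {t}] t = ⊥}.Countable := by
  have hsub : {t | t ∈ s ∧ 𝓝[s \ {t}] t = ⊥} ⊆
      ⋃ p : ℚ × ℚ, {t | s ∩ Set.Ioo (p.1 : ℝ) (p.2 : ℝ) = {t}} := by
    rintro t ⟨hts, hbot⟩
    have hE : (∅ : Set ℝ) ∈ 𝓝[s \ {t}] t := by rw [hbot]; exact Filter.mem_bot
    rw [Metric.mem_nhdsWithin_iff] at hE
    obtain ⟨ε, hε, hball⟩ := hE
    obtain ⟨q, hq1, hq2⟩ := exists_rat_btwn (show t - ε < t by linarith)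
    obtain ⟨r, hr1, hr2⟩ := exists_rat_btwn (show t < t + ε by linarith)
    refine Set.mem_iUnion.2 ⟨(q, r), ?_⟩
    show s ∩ Set.Ioo (q:ℝ) (r:ℝ) = {t}
    apply Set.eq_singleton_iff_unique_mem.2
    refine ⟨⟨hts, hq2, hr1⟩, ?_⟩
    rintro x ⟨hxs, hx1, hx2⟩
    by_contra hxt
    refine hball ⟨?_, hxs, hxt⟩
    rw [Metric.mem_ball, Real.dist_eq, abs_lt]
    constructor <;> linarith
  apply Set.Countable.mono hsub
  apply Set.countable_iUnion
  intro p
  by_cases h : ∃ t, s ∩ Set.Ioo (p.1 : ℝ) (p.2 : ℝ) = {t}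
  · obtain ⟨t, ht⟩ := h
    apply Set.Countable.mono _ (Set.countable_singleton t)
    intro u hu
    simp only [Set.mem_setOf_eq] at hu
    have : ({t} : Set ℝ) = {u} := ht.symm.trans hu
    simp [Set.singleton_eq_singleton_iff.1 this]
  · have : {t | s ∩ Set.Ioo (p.1 : ℝ) (p.2 : ℝ) = {t}} = ∅ := by
      ext t; simp only [Set.mem_setOf_eq, Set.mem_empty_iff_false, iff_false]
      exact fun ht => h ⟨t, ht⟩
    rw [this]; exact Set.countable_empty

end Aux

section LipAt

variable {Y : Type*} [MetricSpace Y]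

lemma sSup_slope_le {f : Y → ℝ} {x : Y} {K r : ℝ} (hK : 0 ≤ K) (hr : 0 < r)
    (hf : ∀ y, |f y - f x| ≤ K * dist y x) :
    sSup ((fun y => |f y - f x| / r) '' Metric.closedBall x r) ≤ K := by
  apply Real.sSup_le _ hK
  rintro _ ⟨y, hy, rfl⟩
  rw [div_le_iff₀ hr]
  calc |f y - f x| ≤ K * dist y x := hf y
    _ ≤ K * r := by
        have := Metric.mem_closedBall.1 hy
        gcongr

lemma sSup_slope_nonneg {f : Y → ℝ} {x : Y} {K r : ℝ} (hK : 0 ≤ K) (hr : 0 < r)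
    (hf : ∀ y, |f y - f x| ≤ K * dist y x) :
    0 ≤ sSup ((fun y => |f y - f x| / r) '' Metric.closedBall x r) := by
  have hmem : (0:ℝ) ∈ (fun y => |f y - f x| / r) '' Metric.closedBall x r := by
    refine ⟨x, Metric.mem_closedBall_self hr.le, by simp⟩
  refine le_csSup ⟨K, ?_⟩ hmem
  rintro _ ⟨y, hy, rfl⟩
  rw [div_le_iff₀ hr]
  calc |f y - f x| ≤ K * dist y x := hf y
    _ ≤ K * r := by
        have := Metric.mem_closedBall.1 hy
        gcongr

lemma lipAt_le_const {f : Y → ℝ} {x : Y} {K : ℝ} (hK : 0 ≤ K)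
    (hf : ∀ y z : Y, |f y - f z| ≤ K * dist y z) : lipAt f x ≤ K := by
  rw [lipAt]
  refine Filter.limsup_le_of_le (Filter.isCoboundedUnder_le_of_eventually_le (𝓝[>] (0:ℝ))
    (x := 0) ?_) ?_
  · filter_upwards [self_mem_nhdsWithin] with r hr
    exact sSup_slope_nonneg hK hr (fun y => hf y x)
  · filter_upwards [self_mem_nhdsWithin] with r hr
    exact sSup_slope_le hK hr (fun y => hf y x)

lemma lipAt_le_add {f g : Y → ℝ} {x : Y} {K Lg : ℝ} (hK : 0 ≤ K) (hLg : 0 ≤ Lg)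
    (hfg : ∀ y z, |(f y - g y) - (f z - g z)| ≤ K * dist y z)
    (hg : ∀ y z, |g y - g z| ≤ Lg * dist y z) :
    lipAt f x ≤ lipAt g x + K := by
  have hf : ∀ y z, |f y - f z| ≤ (Lg + K) * dist y z := by
    intro y z
    have := hfg y z
    have := hg y z
    calc |f y - f z| = |(g y - g z) + ((f y - g y) - (f z - g z))| := by ring_nf
      _ ≤ |g y - g z| + |(f y - g y) - (f z - g z)| := abs_add_le _ _
      _ ≤ Lg * dist y z + K * dist y z := by gcongr
      _ = (Lg + K) * dist y z := by ring
  set F : ℝ → ℝ := fun r => sSup ((fun y => |f y - f x| / r) '' Metric.closedBall x r) with hF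
  set G : ℝ → ℝ := fun r => sSup ((fun y => |g y - g x| / r) '' Metric.closedBall x r) with hG
  have key : ∀ r : ℝ, 0 < r → F r ≤ G r + K := by
    intro r hr
    apply Real.sSup_le
    · rintro _ ⟨y, hy, rfl⟩
      have h1 : |f y - f x| / r ≤ |g y - g x| / r + K := by
        rw [div_add' _ _ _ hr.ne', div_le_div_iff_of_pos_right hr]
        calc |f y - f x| = |(g y - g x) + ((f y - g y) - (f x - g x))| := by ring_nf
          _ ≤ |g y - g x| + |(f y - g y) - (f x - g x)| := abs_add_le _ _
          _ ≤ |g y - g x| + K * dist y x := by have := hfg y x; gcongr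
          _ ≤ |g y - g x| + K * r := by have := Metric.mem_closedBall.1 hy; gcongr
      have hbdd : Lg ∈ upperBounds ((fun y => |g y - g x| / r) '' Metric.closedBall x r) := by
        rintro _ ⟨z, hz, rfl⟩
        rw [div_le_iff₀ hr]
        calc |g z - g x| ≤ Lg * dist z x := hg z x
          _ ≤ Lg * r := by have := Metric.mem_closedBall.1 hz; gcongr
      have h2 : |g y - g x| / r ≤ G r := le_csSup ⟨Lg, hbdd⟩ ⟨y, hy, rfl⟩
      linarith
    · have h0 : 0 ≤ G r := sSup_slope_nonneg hLg hr (fun y => hg y x)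
      linarith
  have hGbdd : ∀ᶠ r in 𝓝[>] (0:ℝ), G r ≤ Lg := by
    filter_upwards [self_mem_nhdsWithin] with r hr
    exact sSup_slope_le hLg hr (fun y => hg y x)
  have hGnonneg : ∀ᶠ r in 𝓝[>] (0:ℝ), (0:ℝ) ≤ G r := by
    filter_upwards [self_mem_nhdsWithin] with r hr
    exact sSup_slope_nonneg hLg hr (fun y => hg y x)
  have step1 : lipAt f x ≤ Filter.limsup (fun r => G r + K) (𝓝[>] (0:ℝ)) := by
    apply Filter.limsup_le_limsup
    · filter_upwards [self_mem_nhdsWithin] with r hr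
      exact key r hr
    · apply Filter.isCoboundedUnder_le_of_eventually_le (𝓝[>] (0:ℝ)) (x := 0)
      filter_upwards [self_mem_nhdsWithin] with r hr
      exact sSup_slope_nonneg (by linarith) hr (fun y => hf y x)
    · refine ⟨Lg + K, ?_⟩
      rw [Filter.eventually_map]
      filter_upwards [hGbdd] with r hr
      linarith
  have step2 : Filter.limsup (fun r => G r + K) (𝓝[>] (0:ℝ)) = lipAt g x + K := by
    have hb : (𝓝[>] (0:ℝ)).IsBoundedUnder (· ≤ ·) G := by
      refine ⟨Lg, ?_⟩
      rw [Filter.eventually_map]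
      exact hGbdd
    exact limsup_add_const (𝓝[>] (0:ℝ)) G K hb
      (Filter.isCoboundedUnder_le_of_eventually_le _ hGnonneg)
  rw [lipAt, ← hF]
  rw [lipAt, ← hG]
  exact step1.trans (le_of_eq step2)

end LipAt

section StarUG

variable {X : Type*} [MetricSpace X] [MeasurableSpace X] [BorelSpace X]

theorem isStarUpperGradient_of_coneNull {n : ℕ} {φ : X → E n} {L : ℝ} (hL : 0 ≤ L)
    (hφ : ∀ y z, ‖φ y - φ z‖ ≤ L * dist y z)
    {w : E n} (hw : ‖w‖ = 1) {θ : ℝ} (hθ0 : 0 < θ)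
    {S : Set X} (hS : MeasurableSet S) (hnull : ConeNull φ (cone w θ) S)
    {ρ : X → ℝ} (hρS : ∀ x ∈ S, ρ x = L * θ) (hρnS : ∀ x ∉ S, ρ x = L) :
    IsStarUpperGradient (fun y => ⟪φ y, w⟫) ρ := by
  intro γ hγ1
  set g : ℝ → ℝ := fun t => ⟪φ (γ.fn t), w⟫ with hgdef
  have hdom : MeasurableSet γ.dom := γ.measurableSet_dom
  have hfn1 : ∀ s ∈ γ.dom, ∀ t ∈ γ.dom, dist (γ.fn s) (γ.fn t) ≤ |s - t| := by
    intro s hs t ht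
    have := hγ1.dist_le_mul s hs t ht
    simpa [Real.dist_eq] using this
  have hgL : ∀ s ∈ γ.dom, ∀ t ∈ γ.dom, |g s - g t| ≤ L * |s - t| := by
    intro s hs t ht
    have h1 : g s - g t = ⟪φ (γ.fn s) - φ (γ.fn t), w⟫ := (inner_sub_left _ _ _).symm
    rw [h1]
    calc |⟪φ (γ.fn s) - φ (γ.fn t), w⟫| ≤ ‖φ (γ.fn s) - φ (γ.fn t)‖ * ‖w‖ :=
          abs_real_inner_le_norm _ _
      _ = ‖φ (γ.fn s) - φ (γ.fn t)‖ := by rw [hw, mul_one]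
      _ ≤ L * dist (γ.fn s) (γ.fn t) := hφ _ _
      _ ≤ L * |s - t| := by have := hfn1 s hs t ht; gcongr
  set c : ℕ → ℝ := fun q => L * θ + 1 / (q + 1) with hc
  have hcpos : ∀ q : ℕ, 0 < c q := by
    intro q
    have : (0:ℝ) < 1 / (q + 1) := by positivity
    have : 0 ≤ L * θ := by positivity
    simp only [hc]
    linarith
  set Kset : ℕ → ℕ → Set ℝ := fun q m =>
    {t | t ∈ γ.dom ∧ ∀ s ∈ γ.dom, |s - t| < 1 / (m + 1) → c q * |s - t| ≤ |g s - g t|} with hKs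
  set W : ℕ → ℕ → Set ℝ := fun q m => Kset q m ∩ {t | t ∈ γ.dom ∧ γ.fn t ∈ S} with hWdef
  -- each Kset is closed
  have hKclosed : ∀ q m, IsClosed (Kset q m) := by
    intro q m
    rw [← isSeqClosed_iff_isClosed]
    intro u t hu hut
    constructor
    · exact γ.isCompact_dom.isClosed.mem_of_tendsto hut
        (Filter.Eventually.of_forall fun k => (hu k).1)
    · intro s hs hst
      have hgt : Filter.Tendsto (fun k => g (u k)) Filter.atTop (𝓝 (g t)) := by
        rw [tendsto_iff_dist_tendsto_zero]
        apply squeeze_zero (fun k => dist_nonneg) (fun k => ?_)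
          (g := fun k => L * |u k - t|)
        · have : Filter.Tendsto (fun k => |u k - t|) Filter.atTop (𝓝 |t - t|) :=
            ((hut.sub tendsto_const_nhds).abs)
          simpa using this.const_mul L
        · have := hgL (u k) (hu k).1 t ((γ.isCompact_dom.isClosed.mem_of_tendsto hut
            (Filter.Eventually.of_forall fun k => (hu k).1)))
          simpa [Real.dist_eq] using this
      have hlim1 : Filter.Tendsto (fun k => c q * |s - u k|) Filter.atTop
          (𝓝 (c q * |s - t|)) := ((tendsto_const_nhds.sub hut).abs).const_mul _
      have hlim2 : Filter.Tendsto (fun k => |g s - g (u k)|) Filter.atTop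
          (𝓝 (|g s - g t|)) := (tendsto_const_nhds.sub hgt).abs
      have hev : ∀ᶠ k in Filter.atTop, c q * |s - u k| ≤ |g s - g (u k)| := by
        have hev1 : ∀ᶠ k in Filter.atTop, |s - u k| < 1 / (m + 1) := by
          have : Filter.Tendsto (fun k => |s - u k|) Filter.atTop (𝓝 |s - t|) :=
            (tendsto_const_nhds.sub hut).abs
          exact this.eventually_lt_const hst
        filter_upwards [hev1] with k hk
        exact (hu k).2 s hs hk
      exact le_of_tendsto_of_tendsto hlim1 hlim2 hev
  -- each W q m is null
  have hWnull : ∀ q m, volume (W q m) = 0 := by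
    intro q m
    have hWmeas : MeasurableSet (W q m) :=
      ((hKclosed q m).measurableSet).inter (γ.measurableSet_mem_dom_and hS)
    have hδ : (0:ℝ) < 1 / (m + 1) := by positivity
    have hcover : W q m ⊆ ⋃ j : ℕ,
        W q m ∩ Set.Ico ((j : ℝ) * (1 / (m + 1))) (((j : ℝ) + 1) * (1 / (m + 1))) := by
      intro t ht
      have ht0 : 0 ≤ t := (γ.dom_subset ht.1.1).1
      set j := ⌊t / (1 / (m + 1))⌋₊ with hj
      have h1 : (j : ℝ) ≤ t / (1 / (m + 1)) := Nat.floor_le (by positivity)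
      have h2 : t / (1 / (m + 1)) < j + 1 := Nat.lt_floor_add_one _
      refine Set.mem_iUnion.2 ⟨j, ht, ?_, ?_⟩
      · calc (j : ℝ) * (1 / (m + 1)) ≤ (t / (1 / (m + 1))) * (1 / (m + 1)) := by gcongr
          _ = t := div_mul_cancel₀ t hδ.ne'
      · exact (div_lt_iff₀ hδ).1 h2
    refine measure_mono_null hcover (measure_iUnion_null fun j => ?_)
    by_contra hpos
    obtain ⟨K'', hK''P, hK''cpt, hK''pos⟩ :=
      (hWmeas.inter measurableSet_Ico).exists_lt_isCompact (pos_iff_ne_zero.2 hpos)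
    have hKdom : K'' ⊆ γ.dom := fun t ht => (hK''P ht).1.1.1
    have hKS : ∀ t ∈ K'', γ.fn t ∈ S := fun t ht => (hK''P ht).1.2.2
    have hKK : ∀ t ∈ K'', t ∈ Kset q m := fun t ht => (hK''P ht).1.1
    have hKI : ∀ t ∈ K'', t ∈ Set.Ico ((j : ℝ) * (1 / (m + 1))) (((j : ℝ) + 1) * (1 / (m + 1))) :=
      fun t ht => (hK''P ht).2
    have hgraph' : IsCompact ((fun t => (t, γ.fn t)) '' K'') := by
      apply hK''cpt.image_of_continuousOn
      exact continuousOn_id.prodMk (γ.continuousOn_fn.mono hKdom)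
    have hsubgraph : (fun t => (t, γ.fn t)) '' K'' ⊆ γ.graph := by
      rintro _ ⟨t, ht, rfl⟩; exact γ.fn_mem_graph (hKdom ht)
    have hne : ((fun t => (t, γ.fn t)) '' K'').Nonempty :=
      (MeasureTheory.nonempty_of_measure_ne_zero hK''pos.ne').image _
    have hfrag : IsFragmentGraph X ((fun t => (t, γ.fn t)) '' K'') :=
      ⟨fun p hp => γ.2.1 p (hsubgraph hp), fun p hp q' hq' => γ.2.2 p (hsubgraph hp) q' (hsubgraph hq')⟩
    set γ' : Fragment X := ⟨⟨⟨_, hgraph'⟩, hne⟩, hfrag⟩ with hγ'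
    have hγ'graph : γ'.graph = (fun t => (t, γ.fn t)) '' K'' := rfl
    have hcc : IsConeCurve φ (cone w θ) γ' := by
      refine ⟨c q, hcpos q, ?_⟩
      rintro p hp q' hq'
      rw [hγ'graph] at hp hq'
      obtain ⟨s, hsmem, rfl⟩ := hp
      obtain ⟨t, htmem, rfl⟩ := hq'
      have hsd := hKdom hsmem
      have htd := hKdom htmem
      have hst : |t - s| < 1 / (m + 1) := by
        obtain ⟨hs1, hs2⟩ := hKI s hsmem
        obtain ⟨ht1, ht2⟩ := hKI t htmem
        rw [abs_lt]
        constructor <;> nlinarith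
      have hkey : c q * |t - s| ≤ |g t - g s| := (hKK s hsmem).2 t htd hst
      have hinner : ⟪φ (γ.fn s) - φ (γ.fn t), w⟫ = g s - g t := by
        rw [inner_sub_left]
      have hnorm : ‖φ (γ.fn s) - φ (γ.fn t)‖ ≤ L * |s - t| := by
        calc ‖φ (γ.fn s) - φ (γ.fn t)‖ ≤ L * dist (γ.fn s) (γ.fn t) := hφ _ _
          _ ≤ L * |s - t| := by have := hfn1 s hsd t htd; gcongr
      have hlow : c q * |s - t| ≤ |⟪φ (γ.fn s) - φ (γ.fn t), w⟫| := by
        rw [hinner, abs_sub_comm s t]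
        calc c q * |t - s| ≤ |g t - g s| := hkey
          _ = |g s - g t| := abs_sub_comm _ _
      constructor
      · show θ * ‖φ (γ.fn s) - φ (γ.fn t)‖ ≤ |⟪φ (γ.fn s) - φ (γ.fn t), w⟫|
        have h1 : θ * ‖φ (γ.fn s) - φ (γ.fn t)‖ ≤ θ * (L * |s - t|) := by gcongr
        have h2 : θ * (L * |s - t|) ≤ c q * |s - t| := by
          have h3 : θ * L ≤ c q := by
            have : (0:ℝ) < 1 / (q + 1) := by positivity
            simp only [hc]; nlinarith
          have := abs_nonneg (s - t)
          nlinarith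
        exact h1.trans (h2.trans hlow)
      · intro hball
        rw [Metric.mem_ball, dist_zero_right] at hball
        have h2 : |⟪φ (γ.fn s) - φ (γ.fn t), w⟫| ≤ ‖φ (γ.fn s) - φ (γ.fn t)‖ := by
          have := abs_real_inner_le_norm (φ (γ.fn s) - φ (γ.fn t)) w
          rwa [hw, mul_one] at this
        simp only at hball
        linarith [hlow, h2]
    have him : γ'.im = γ.fn '' K'' := by
      show Prod.snd '' ((fun t => (t, γ.fn t)) '' K'') = _
      rw [Set.image_image]
    have h0 : μH[1] (γ.fn '' K'') = 0 := by
      have hh := hnull γ' hcc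
      rw [him] at hh
      have hsub : γ.fn '' K'' ∩ S = γ.fn '' K'' :=
        Set.inter_eq_self_of_subset_left (by rintro _ ⟨t, ht, rfl⟩; exact hKS t ht)
      rwa [hsub] at hh
    set ginv := Function.invFunOn γ.fn K'' with hginvdef
    have hinv1 : ∀ x ∈ γ.fn '' K'', ginv x ∈ K'' ∧ γ.fn (ginv x) = x := by
      rintro x ⟨t, ht, rfl⟩
      exact ⟨Function.invFunOn_mem ⟨t, ht, rfl⟩, Function.invFunOn_eq ⟨t, ht, rfl⟩⟩
    have hlip : LipschitzOnWith 2 ginv (γ.fn '' K'') := by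
      apply LipschitzOnWith.of_dist_le_mul
      intro x hx y hy
      obtain ⟨hx1, hx2⟩ := hinv1 x hx
      obtain ⟨hy1, hy2⟩ := hinv1 y hy
      have hbl := γ.abs_sub_le (hKdom hx1) (hKdom hy1)
      rw [hx2, hy2] at hbl
      simpa [Real.dist_eq] using hbl
    have hKsub : K'' ⊆ ginv '' (γ.fn '' K'') := by
      intro t ht
      have hmem : γ.fn t ∈ γ.fn '' K'' := ⟨t, ht, rfl⟩
      obtain ⟨h1, h2⟩ := hinv1 _ hmem
      have heq : ginv (γ.fn t) = t := by
        have h3 := γ.abs_sub_le (hKdom h1) (hKdom ht)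
        rw [h2] at h3
        simp only [dist_self, mul_zero] at h3
        have := abs_nonneg (ginv (γ.fn t) - t)
        have h4 : |ginv (γ.fn t) - t| = 0 := le_antisymm h3 this
        have := abs_eq_zero.1 h4
        linarith
      exact ⟨γ.fn t, hmem, heq⟩
    have hvol0 : volume K'' = 0 := by
      have h1 : μH[1] K'' ≤ μH[1] (ginv '' (γ.fn '' K'')) := measure_mono hKsub
      have h2 : μH[1] (ginv '' (γ.fn '' K'')) ≤ (2:ℝ≥0) ^ (1:ℝ) * μH[1] (γ.fn '' K'') :=
        hlip.hausdorffMeasure_image_le (by norm_num)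
      rw [h0, mul_zero] at h2
      have h3 : μH[(1:ℝ)] K'' = 0 := le_antisymm (h1.trans h2) zero_le
      rw [← MeasureTheory.hausdorffMeasure_real]
      exact h3
    exact absurd hvol0 hK''pos.ne'
  -- assembling the null set
  set Iso := {t | t ∈ γ.dom ∧ 𝓝[γ.dom \ {t}] t = ⊥} with hIsodef
  have hIsoNull : volume Iso = 0 := ((countable_isolated γ.dom).measure_zero _)
  set N := Iso ∪ ⋃ q : ℕ, ⋃ m : ℕ, W q m with hNdef
  have hNnull : volume N = 0 :=
    measure_union_null hIsoNull
      (measure_iUnion_null fun q => measure_iUnion_null fun m => hWnull q m)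
  have hae1 : ∀ᵐ t ∂(volume.restrict γ.dom), t ∉ N := by
    apply MeasureTheory.ae_restrict_of_ae
    rw [MeasureTheory.ae_iff]
    simpa only [not_not, Set.setOf_mem_eq] using hNnull
  have hae2 : ∀ᵐ t ∂(volume.restrict γ.dom), t ∈ γ.dom := MeasureTheory.ae_restrict_mem hdom
  filter_upwards [hae1, hae2] with t htN htdom
  intro v hv
  by_cases hts : γ.fn t ∈ S
  · rw [hρS _ hts]
    by_contra hlt
    push_neg at hlt
    obtain ⟨q, hq⟩ := exists_nat_one_div_lt (show (0:ℝ) < (|v| - L * θ) / 2 by linarith)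
    have hder := hasDerivWithinAt_iff_isLittleO.1 hv
    have hev := (Asymptotics.isLittleO_iff.1 hder) (show (0:ℝ) < 1 / ((q:ℝ) + 1) by positivity)
    rw [eventually_nhdsWithin_iff, Metric.eventually_nhds_iff] at hev
    obtain ⟨ε, hε, hballs⟩ := hev
    obtain ⟨m, hm⟩ := exists_nat_one_div_lt hε
    have htK : t ∈ Kset q m := by
      refine ⟨htdom, fun s hs hst => ?_⟩
      have hdist : dist s t < ε := by
        rw [Real.dist_eq]
        exact hst.trans hm
      have hb := hballs hdist hs
      simp only [Function.comp, smul_eq_mul, Real.norm_eq_abs] at hb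
      have h2 : |(s - t) * v| - |g s - g t| ≤ 1 / ((q:ℝ) + 1) * |s - t| := by
        calc |(s - t) * v| - |g s - g t|
            ≤ |(s - t) * v - (g s - g t)| := abs_sub_abs_le_abs_sub _ _
          _ = |g s - g t - (s - t) * v| := abs_sub_comm _ _
          _ ≤ 1 / ((q:ℝ) + 1) * |s - t| := hb
      have h3 : |(s - t) * v| = |s - t| * |v| := by rw [abs_mul]
      have h4 : L * θ + 2 * (1 / ((q:ℝ) + 1)) ≤ |v| := by
        linarith
      have h5 : (0:ℝ) ≤ |s - t| := abs_nonneg _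
      simp only [hc]
      nlinarith
    exact htN (Or.inr (Set.mem_iUnion.2 ⟨q, Set.mem_iUnion.2 ⟨m, ⟨htK, htdom, hts⟩⟩⟩))
  · rw [hρnS _ hts]
    have hnb : 𝓝[γ.dom \ {t}] t ≠ ⊥ := fun hbot => htN (Or.inl ⟨htdom, hbot⟩)
    haveI : (𝓝[γ.dom \ {t}] t).NeBot := ⟨hnb⟩
    have hslope := hasDerivWithinAt_iff_tendsto_slope.1 hv
    have hb : ∀ᶠ s in 𝓝[γ.dom \ {t}] t,
        |slope ((fun y => ⟪φ y, w⟫) ∘ γ.fn) t s| ≤ L := by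
      filter_upwards [self_mem_nhdsWithin] with s hs
      obtain ⟨hsdom, hsne⟩ := hs
      have hst : s ≠ t := by simpa using hsne
      have hstpos : 0 < |s - t| := by
        rw [abs_pos]
        exact sub_ne_zero.2 hst
      rw [slope_def_field]
      have hgb := hgL s hsdom t htdom
      rw [abs_div]
      rw [div_le_iff₀ hstpos]
      exact hgb
    exact le_of_tendsto hslope.abs hb

end StarUG

/-- If there is `C ≥ 1` such that `Lip(f,·) ≤ C ρ` `μ`-a.e. for every
Lipschitz `f : X → ℝ` and every Borel `*`-upper gradient `ρ` of `f`, then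
`μ(S ∩ ind φ) = 0` for every Lipschitz `φ : X → ℝⁿ` and every `S ∈ 𝒮(φ)`. -/
theorem singular_null_of_star_upper_gradients (μ : Measure X) [SigmaFinite μ]
    (C : ℝ) (hC : 1 ≤ C)
    (h : ∀ f : X → ℝ, (∃ K, LipschitzWith K f) → ∀ ρ : X → ℝ, Measurable ρ →
      IsStarUpperGradient f ρ → ∀ᵐ x ∂μ, lipAt f x ≤ C * ρ x) :
    ∀ (n : ℕ) (φ : X → E n), (∃ K, LipschitzWith K φ) →
      ∀ S : Set X, MemScal φ S → μ (S ∩ indSet φ) = 0 := by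
  intro n φ hφK S hs
  classical
  obtain ⟨K, hK⟩ := hφK
  set L : ℝ := (K : ℝ) with hLdef
  have hL0 : (0:ℝ) ≤ L := K.coe_nonneg
  have hC0 : (0:ℝ) < C := by linarith
  have hφ' : ∀ y z, ‖φ y - φ z‖ ≤ L * dist y z := by
    intro y z
    have := hK.dist_le_mul y z
    rwa [dist_eq_norm] at this
  have hlipf : ∀ w : E n, ‖w‖ = 1 → LipschitzWith K (fun y => ⟪φ y, w⟫) := by
    intro w hw
    apply LipschitzWith.of_dist_le_mul
    intro y z
    rw [Real.dist_eq]
    have he : ⟪φ y, w⟫ - ⟪φ z, w⟫ = ⟪φ y - φ z, w⟫ := (inner_sub_left _ _ _).symm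
    rw [he]
    calc |⟪φ y - φ z, w⟫| ≤ ‖φ y - φ z‖ * ‖w‖ := abs_real_inner_le_norm _ _
      _ = ‖φ y - φ z‖ := by rw [hw, mul_one]
      _ ≤ L * dist y z := hφ' y z
  obtain ⟨hSmeas, hdecomp⟩ := hs
  have key : ∀ k : ℕ, ∀ᵐ x ∂μ, x ∈ S →
      ∃ w : E n, ‖w‖ = 1 ∧ lipAt (fun y => ⟪φ y, w⟫) x ≤ 1 / ((k:ℝ) + 1) := by
    intro k
    set a : ℝ := 1 / ((k:ℝ) + 1) with ha
    have ha0 : 0 < a := by positivity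
    set θ : ℝ := min (1/2) (a / (C * (L + 1))) with hθdef
    have hθ0 : 0 < θ := lt_min (by norm_num) (by positivity)
    have hθ1 : θ < 1 := lt_of_le_of_lt (min_le_left _ _) (by norm_num)
    obtain ⟨m, S', w, hSeq, hprop⟩ := hdecomp θ ⟨hθ0, hθ1⟩
    have hae : ∀ᵐ x ∂μ, ∀ i : Fin m,
        lipAt (fun y => ⟪φ y, w i⟫) x ≤ C * (if x ∈ S' i then L * θ else L) := by
      rw [MeasureTheory.ae_all_iff]
      intro i
      obtain ⟨hSi, hwi, hnulli⟩ := hprop i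
      exact h (fun y => ⟪φ y, w i⟫) ⟨K, hlipf _ hwi⟩
        (fun x => if x ∈ S' i then L * θ else L)
        (Measurable.ite hSi measurable_const measurable_const)
        (isStarUpperGradient_of_coneNull hL0 hφ' hwi hθ0 hSi hnulli
          (fun x hx => if_pos hx) (fun x hx => if_neg hx))
    filter_upwards [hae] with x hx hxS
    rw [hSeq] at hxS
    obtain ⟨i, hi⟩ := Set.mem_iUnion.1 hxS
    refine ⟨w i, (hprop i).2.1, ?_⟩
    have h1 := hx i
    rw [if_pos hi] at h1
    apply h1.trans
    have h2 : θ ≤ a / (C * (L + 1)) := min_le_right _ _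
    have h3 : C * (L * θ) ≤ C * (L * (a / (C * (L + 1)))) := by gcongr
    apply h3.trans
    have h4 : C * (L * (a / (C * (L + 1)))) = a * (L / (L + 1)) := by
      field_simp
    rw [h4]
    have h5 : L / (L + 1) ≤ 1 := by
      rw [div_le_one (by linarith)]
      linarith
    calc a * (L / (L + 1)) ≤ a * 1 := by gcongr
      _ = a := mul_one a
  have keyall : ∀ᵐ x ∂μ, ∀ k : ℕ, x ∈ S →
      ∃ w : E n, ‖w‖ = 1 ∧ lipAt (fun y => ⟪φ y, w⟫) x ≤ 1 / ((k:ℝ) + 1) :=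
    (MeasureTheory.ae_all_iff).2 key
  rw [MeasureTheory.ae_iff] at keyall
  apply measure_mono_null _ keyall
  intro x hxmem
  obtain ⟨hxS, hxind⟩ := hxmem
  simp only [Set.mem_setOf_eq]
  intro hP
  choose wseq hw1 hw2 using fun k => hP k hxS
  have hsph : ∀ k, wseq k ∈ Metric.sphere (0 : E n) 1 := by
    intro k
    rw [mem_sphere_iff_norm, sub_zero]
    exact hw1 k
  obtain ⟨winf, hwinfmem, σ, hσmono, hσtend⟩ :=
    (isCompact_sphere (0 : E n) 1).tendsto_subseq hsph
  have hwinf : ‖winf‖ = 1 := by rwa [mem_sphere_iff_norm, sub_zero] at hwinfmem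
  have hxlip := hxind winf hwinf
  have hbound : ∀ j : ℕ,
      lipAt (fun y => ⟪φ y, winf⟫) x ≤ 1 / ((σ j : ℝ) + 1) + L * ‖winf - wseq (σ j)‖ := by
    intro j
    have h1 : lipAt (fun y => ⟪φ y, winf⟫) x ≤
        lipAt (fun y => ⟪φ y, wseq (σ j)⟫) x + L * ‖winf - wseq (σ j)‖ := by
      apply lipAt_le_add (by positivity) hL0
      · intro y z
        have he : (⟪φ y, winf⟫ - ⟪φ y, wseq (σ j)⟫) - (⟪φ z, winf⟫ - ⟪φ z, wseq (σ j)⟫)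
            = ⟪φ y - φ z, winf - wseq (σ j)⟫ := by
          rw [inner_sub_left, inner_sub_right, inner_sub_right]
        rw [he]
        calc |⟪φ y - φ z, winf - wseq (σ j)⟫| ≤ ‖φ y - φ z‖ * ‖winf - wseq (σ j)‖ :=
              abs_real_inner_le_norm _ _
          _ ≤ (L * dist y z) * ‖winf - wseq (σ j)‖ := by
              have := hφ' y z
              gcongr
          _ = (L * ‖winf - wseq (σ j)‖) * dist y z := by ring
      · intro y z
        have he : ⟪φ y, wseq (σ j)⟫ - ⟪φ z, wseq (σ j)⟫ = ⟪φ y - φ z, wseq (σ j)⟫ :=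
          (inner_sub_left _ _ _).symm
        rw [he]
        calc |⟪φ y - φ z, wseq (σ j)⟫| ≤ ‖φ y - φ z‖ * ‖wseq (σ j)‖ :=
              abs_real_inner_le_norm _ _
          _ = ‖φ y - φ z‖ := by rw [hw1 (σ j), mul_one]
          _ ≤ L * dist y z := hφ' y z
    have h2 := hw2 (σ j)
    linarith
  have htend : Filter.Tendsto
      (fun j => 1 / ((σ j : ℝ) + 1) + L * ‖winf - wseq (σ j)‖) Filter.atTop (𝓝 0) := by
    have ht1 : Filter.Tendsto (fun j => 1 / ((σ j : ℝ) + 1)) Filter.atTop (𝓝 0) :=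
      tendsto_one_div_add_atTop_nhds_zero_nat.comp hσmono.tendsto_atTop
    have ht2 : Filter.Tendsto (fun j => ‖winf - wseq (σ j)‖) Filter.atTop (𝓝 0) := by
      have hsub : Filter.Tendsto (fun j => winf - wseq (σ j)) Filter.atTop (𝓝 (winf - winf)) :=
        tendsto_const_nhds.sub hσtend
      rw [sub_self] at hsub
      simpa using hsub.norm
    have := ht1.add (ht2.const_mul L)
    simpa using this
  have hfinal : lipAt (fun y => ⟪φ y, winf⟫) x ≤ 0 := ge_of_tendsto' htend hbound
  linarith

end BKO
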